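/- arXiv:2310.18182 — 4 statements merged into one kernel-verified Lean document; each statement's English description precedes it below -/
import Mathlib

section
/- Let C be a compact metric space, I an interval of ℝ, and g : I × C → ℝ a function such that g and its partial derivative ∂g/∂t (in the first variable) exist and are continuous on I × C. Define φ(t) := sup_{x ∈ C} g(t,x) and C_t := {x ∈ C : g(t,x) = φ(t)}. Then φ is continuous on I, and for every t ∈ I that is not the left endpoint of I, the upper left-hand Dini derivative of φ at t satisfies d_L^+ φ(t) = min_{x ∈ C_t} (∂g/∂t)(t,x). -/
open Filter Topology

/-- The upper left-hand Dini derivative `limsup_{h → 0⁺} (f t - f (t - h)) / h`,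
valued in the extended reals. -/
noncomputable def diniUL (f : ℝ → ℝ) (t : ℝ) : EReal :=
  Filter.limsup (fun h : ℝ => (((f t - f (t - h)) / h : ℝ) : EReal)) (𝓝[>] (0 : ℝ))

section auxS3
open Set
set_option linter.unusedSectionVars false

variable {C : Type} [MetricSpace C] [CompactSpace C] [Nonempty C]
  (I : Set ℝ) (g : ℝ → C → ℝ)

lemma slice_cont (hgcont : ContinuousOn (fun p : ℝ × C => g p.1 p.2) (I ×ˢ Set.univ))
    {s : ℝ} (hs : s ∈ I) : Continuous (fun x : C => g s x) := by
  rw [← continuousOn_univ]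
  exact hgcont.comp ((continuous_const.prodMk continuous_id).continuousOn)
    (fun x _ => ⟨hs, trivial⟩)

lemma slice_cont_t (hgcont : ContinuousOn (fun p : ℝ × C => g p.1 p.2) (I ×ˢ Set.univ))
    (x : C) : ContinuousOn (fun s : ℝ => g s x) I :=
  hgcont.comp ((continuous_id.prodMk continuous_const).continuousOn)
    (fun s hs => ⟨hs, trivial⟩)

lemma bdd_range (hgcont : ContinuousOn (fun p : ℝ × C => g p.1 p.2) (I ×ˢ Set.univ))
    {s : ℝ} (hs : s ∈ I) : BddAbove (Set.range (g s)) :=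
  (isCompact_range (slice_cont I g hgcont hs)).bddAbove

lemma tube (hgcont : ContinuousOn (fun p : ℝ × C => g p.1 p.2) (I ×ˢ Set.univ))
    {t : ℝ} (ht : t ∈ I) {ε : ℝ} (hε : 0 < ε) :
    ∀ᶠ s in 𝓝[I] t, ∀ x : C, |g s x - g t x| ≤ ε := by
  have key : ∀ x : C, ∃ U ∈ 𝓝[I] t, ∃ V : Set C, IsOpen V ∧ x ∈ V ∧
      ∀ s ∈ U, ∀ y ∈ V, |g s y - g t x| < ε / 2 := by
    intro x
    have hcx : ContinuousWithinAt (fun p : ℝ × C => g p.1 p.2) (I ×ˢ Set.univ) (t, x) :=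
      hgcont (t, x) ⟨ht, trivial⟩
    have hmem : {p : ℝ × C | |g p.1 p.2 - g t x| < ε / 2} ∈ 𝓝[I ×ˢ Set.univ] (t, x) := by
      have h := hcx (Metric.ball_mem_nhds (g t x) (show (0:ℝ) < ε/2 by positivity))
      refine Filter.mem_of_superset h ?_
      intro p hp
      simpa [Real.dist_eq] using hp
    rw [nhdsWithin_prod_eq, nhdsWithin_univ] at hmem
    obtain ⟨U, hU, V', hV', hUV⟩ := Filter.mem_prod_iff.mp hmem
    obtain ⟨V, hVV', hVopen, hxV⟩ := mem_nhds_iff.mp hV'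
    exact ⟨U, hU, V, hVopen, hxV, fun s hs y hy => hUV (Set.mk_mem_prod hs (hVV' hy))⟩
  choose U hU V hVopen hxV hUV using key
  obtain ⟨F, hF⟩ := isCompact_univ.elim_finite_subcover V hVopen
    (fun y _ => Set.mem_iUnion.2 ⟨y, hxV y⟩)
  have hU0 : (⋂ x ∈ F, U x) ∈ 𝓝[I] t := (Filter.biInter_finset_mem F).mpr fun x _ => hU x
  filter_upwards [hU0] with s hs
  intro y
  obtain ⟨x, hxF, hyV⟩ : ∃ x ∈ F, y ∈ V x := by
    simpa using hF (Set.mem_univ y)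
  have hsU : s ∈ U x := by
    have := Set.mem_iInter₂.mp hs x hxF; exact this
  have htU : t ∈ U x := mem_of_mem_nhdsWithin ht (hU x)
  have h1 := hUV x s hsU y hyV
  have h2 := hUV x t htU y hyV
  calc |g s y - g t y| ≤ |g s y - g t x| + |g t x - g t y| := by
        have := abs_sub_le (g s y) (g t x) (g t y); linarith [abs_sub_comm (g t x) (g t y)]
    _ ≤ ε := by rw [abs_sub_comm (g t x) (g t y)]; linarith

lemma auxCont (hgcont : ContinuousOn (fun p : ℝ × C => g p.1 p.2) (I ×ˢ Set.univ)) :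
    ContinuousOn (fun t => ⨆ x : C, g t x) I := by
  intro t ht
  have : Tendsto (fun t => ⨆ x : C, g t x) (𝓝[I] t) (𝓝 (⨆ x : C, g t x)) := by
    rw [Metric.tendsto_nhds]
    intro ε hε
    have hI' : I ∈ 𝓝[I] t := self_mem_nhdsWithin
    filter_upwards [tube I g hgcont ht (half_pos hε), hI'] with s hs hsI
    have hb1 := bdd_range I g hgcont ht
    have hb2 := bdd_range I g hgcont hsI
    have h1 : (⨆ x : C, g s x) ≤ (⨆ x : C, g t x) + ε / 2 := by
      refine ciSup_le fun y => ?_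
      have := abs_sub_le_iff.mp (hs y)
      linarith [le_ciSup hb1 y]
    have h2 : (⨆ x : C, g t x) ≤ (⨆ x : C, g s x) + ε / 2 := by
      refine ciSup_le fun y => ?_
      have := abs_sub_le_iff.mp (hs y)
      linarith [le_ciSup hb2 y]
    rw [Real.dist_eq]
    rw [abs_sub_lt_iff]
    constructor <;> linarith
  exact this

lemma auxDini (hI : I.OrdConnected) (g' : ℝ → C → ℝ)
    (hderiv : ∀ x : C, ∀ t ∈ I, HasDerivWithinAt (fun s => g s x) (g' t x) I t)
    (hgcont : ContinuousOn (fun p : ℝ × C => g p.1 p.2) (I ×ˢ Set.univ))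
    (hg'cont : ContinuousOn (fun p : ℝ × C => g' p.1 p.2) (I ×ˢ Set.univ))
    {t : ℝ} (ht : t ∈ I) {s0 : ℝ} (hs0I : s0 ∈ I) (hs0t : s0 < t) :
    IsLeast ((fun x : C => ((g' t x : ℝ) : EReal)) '' {x : C | g t x = ⨆ y : C, g t y})
      (diniUL (fun s => ⨆ x : C, g s x) t) := by
  set φ : ℝ → ℝ := fun s => ⨆ x : C, g s x with hφdef
  have hsub : Set.Icc s0 t ⊆ I := hI.out hs0I ht
  have hio : Set.Ioo s0 t ⊆ interior I :=
    (IsOpen.subset_interior_iff isOpen_Ioo).mpr (Set.Ioo_subset_Icc_self.trans hsub)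
  have hleφ : ∀ s ∈ I, ∀ y, g s y ≤ φ s := fun s hs y => le_ciSup (bdd_range I g hgcont hs) y
  have hax : ∀ s : ℝ, ∃ x : C, s ∈ I → ∀ y, g s y ≤ g s x := by
    intro s
    by_cases hs : s ∈ I
    · obtain ⟨x, -, hx⟩ := isCompact_univ.exists_isMaxOn Set.univ_nonempty
        (slice_cont I g hgcont hs).continuousOn
      exact ⟨x, fun _ y => hx (Set.mem_univ y)⟩
    · exact ⟨Classical.arbitrary C, fun h => absurd h hs⟩
  choose xm hxm using hax
  have hφeq : ∀ s ∈ I, φ s = g s (xm s) := fun s hs =>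
    le_antisymm (ciSup_le (hxm s hs)) (hleφ s hs (xm s))
  set K : Set (ℝ × C) := Set.Icc s0 t ×ˢ Set.univ with hKdef
  have hK : IsCompact K := isCompact_Icc.prod isCompact_univ
  have hKsub : K ⊆ I ×ˢ Set.univ := Set.prod_mono hsub subset_rfl
  obtain ⟨p0, -, hp0⟩ := hK.exists_isMaxOn
    ⟨(t, Classical.arbitrary C), ⟨⟨le_of_lt hs0t, le_refl t⟩, trivial⟩⟩
    ((hg'cont.mono hKsub).abs)
  set M : ℝ := |g' p0.1 p0.2| with hMdef
  have hM : ∀ s ∈ Set.Icc s0 t, ∀ x : C, |g' s x| ≤ M := fun s hs x => hp0 (show ((s,x) : ℝ × C) ∈ K from ⟨hs, trivial⟩)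
  have hM0 : 0 ≤ M :=
    le_trans (abs_nonneg _) (hM t ⟨le_of_lt hs0t, le_refl t⟩ (Classical.arbitrary C))
  -- mean value theorem helper
  have hMVT : ∀ (x : C) (h : ℝ), 0 < h → h ≤ t - s0 →
      ∃ c ∈ Set.Ioo (t - h) t, g' c x = (g t x - g (t - h) x) / h := by
    intro x h h0 hts
    have hat : t - h < t := by linarith
    have hIcc : Set.Icc (t - h) t ⊆ I := fun z hz => hsub ⟨by linarith [hz.1], hz.2⟩
    have hcont : ContinuousOn (fun s => g s x) (Set.Icc (t - h) t) :=
      (slice_cont_t I g hgcont x).mono hIcc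
    have hder : ∀ c ∈ Set.Ioo (t - h) t, HasDerivAt (fun s => g s x) (g' c x) c := by
      intro c hc
      have hcI : c ∈ interior I := hio ⟨by linarith [hc.1], hc.2⟩
      exact (hderiv x c (interior_subset hcI)).hasDerivAt (mem_interior_iff_mem_nhds.mp hcI)
    obtain ⟨c, hc, hceq⟩ :=
      exists_hasDerivAt_eq_slope (fun s => g s x) (fun s => g' s x) hat hcont hder
    refine ⟨c, hc, ?_⟩
    rw [hceq]
    congr 1
    ring
  set slp : ℝ → ℝ := fun h => (φ t - φ (t - h)) / h with hslpdef
  have hdini : diniUL φ t = Filter.limsup (fun h : ℝ => ((slp h : ℝ) : EReal)) (𝓝[>] (0:ℝ)) :=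
    rfl
  have hev : ∀ᶠ h in 𝓝[>] (0:ℝ), 0 < h ∧ h ≤ t - s0 := by
    have := Ioc_mem_nhdsGT (show (0:ℝ) < t - s0 by linarith)
    exact Filter.mem_of_superset this (fun h hh => ⟨hh.1, by linarith [hh.2]⟩)
  -- basic facts for admissible h
  have hbasic : ∀ h : ℝ, 0 < h → h ≤ t - s0 →
      ∃ c ∈ Set.Ioo (t - h) t, g' c (xm (t - h)) ≤ slp h ∧
        φ t - g t (xm (t - h)) ≤ 2 * (h * M) ∧ g t (xm (t - h)) ≤ φ t := by
    intro h h0 hts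
    have hthI : t - h ∈ I := hsub ⟨by linarith, by linarith⟩
    obtain ⟨c, hc, hceq⟩ := hMVT (xm (t - h)) h h0 hts
    have hcmem : c ∈ Set.Icc s0 t := ⟨by linarith [hc.1], le_of_lt hc.2⟩
    have hφth : φ (t - h) = g (t - h) (xm (t - h)) := hφeq (t - h) hthI
    have hgle : g t (xm (t - h)) ≤ φ t := hleφ t ht (xm (t - h))
    have hs1 : g' c (xm (t - h)) ≤ slp h := by
      rw [hceq]
      apply div_le_div_of_nonneg_right ?_ h0.le
      · linarith
    -- difference identity
    have hdiff : g t (xm (t - h)) - g (t - h) (xm (t - h)) = h * g' c (xm (t - h)) := by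
      field_simp at hceq ⊢
      linarith [hceq]
    have hMc : |g' c (xm (t - h))| ≤ M := hM c hcmem _
    -- bound |φ t - φ (t-h)| pieces
    obtain ⟨c', hc', hceq'⟩ := hMVT (xm t) h h0 hts
    have hc'mem : c' ∈ Set.Icc s0 t := ⟨by linarith [hc'.1], le_of_lt hc'.2⟩
    have hdiff' : g t (xm t) - g (t - h) (xm t) = h * g' c' (xm t) := by
      field_simp at hceq' ⊢
      linarith [hceq']
    have hMc' : |g' c' (xm t)| ≤ M := hM c' hc'mem _
    have hφt : φ t = g t (xm t) := hφeq t ht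
    have hA : φ t - φ (t - h) ≤ h * M := by
      have h1 : g (t - h) (xm t) ≤ φ (t - h) := hleφ (t - h) hthI (xm t)
      have h2 : h * g' c' (xm t) ≤ h * M := by
        apply mul_le_mul_of_nonneg_left _ (le_of_lt h0)
        linarith [le_abs_self (g' c' (xm t))]
      linarith
    have hB : g (t - h) (xm (t - h)) - g t (xm (t - h)) ≤ h * M := by
      have h2 : -(h * g' c (xm (t - h))) ≤ h * M := by
        rw [← mul_neg]
        apply mul_le_mul_of_nonneg_left _ (le_of_lt h0)
        linarith [neg_abs_le (g' c (xm (t - h)))]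
      linarith
    refine ⟨c, hc, hs1, ?_, hgle⟩
    linarith
  -- upper bound
  have hub : ∀ x : C, g t x = φ t → diniUL φ t ≤ ((g' t x : ℝ) : EReal) := by
    intro x hx
    have htend : Tendsto (fun h : ℝ => (g t x - g (t - h) x) / h) (𝓝[>] (0:ℝ)) (𝓝 (g' t x)) := by
      have hd := (hasDerivWithinAt_iff_tendsto_slope).mp (hderiv x t ht)
      have hmap : Tendsto (fun h : ℝ => t - h) (𝓝[>] (0:ℝ)) (𝓝[I \ {t}] t) := by
        rw [tendsto_nhdsWithin_iff]
        constructor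
        · have h1 : Tendsto (fun h : ℝ => t - h) (𝓝 (0:ℝ)) (𝓝 (t - 0)) :=
            tendsto_const_nhds.sub tendsto_id
          simpa using h1.mono_left nhdsWithin_le_nhds
        · filter_upwards [hev] with h hh
          refine ⟨hsub ⟨by linarith [hh.2], by linarith [hh.1]⟩, ?_⟩
          simp only [Set.mem_singleton_iff]
          intro hcon
          have : h = 0 := by linarith
          exact absurd this (ne_of_gt hh.1)
      have hcomp := hd.comp hmap
      refine hcomp.congr (fun h => ?_)
      show slope (fun s => g s x) t (t - h) = _
      rw [slope_def_field, show t - h - t = -h by ring, div_neg, ← neg_div, neg_sub]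
    have htendE : Tendsto (fun h : ℝ => (((g t x - g (t - h) x) / h : ℝ) : EReal))
        (𝓝[>] (0:ℝ)) (𝓝 ((g' t x : ℝ) : EReal)) := EReal.tendsto_coe.mpr htend
    have hle : ∀ᶠ h in 𝓝[>] (0:ℝ),
        ((slp h : ℝ) : EReal) ≤ (((g t x - g (t - h) x) / h : ℝ) : EReal) := by
      filter_upwards [hev] with h hh
      rw [EReal.coe_le_coe_iff]
      have hthI : t - h ∈ I := hsub ⟨by linarith [hh.2], by linarith [hh.1]⟩
      have h1 : g (t - h) x ≤ φ (t - h) := hleφ _ hthI x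
      apply div_le_div_of_nonneg_right ?_ hh.1.le
      · linarith [hx.le, hx.ge]
    calc diniUL φ t
        ≤ Filter.limsup (fun h : ℝ => (((g t x - g (t - h) x) / h : ℝ) : EReal)) (𝓝[>] (0:ℝ)) :=
          Filter.limsup_le_limsup hle (by isBoundedDefault) (by isBoundedDefault)
      _ = _ := htendE.limsup_eq
  -- lower bound by -M
  have hlb : ((-M : ℝ) : EReal) ≤ diniUL φ t := by
    refine le_limsup_of_frequently_le ?_ (by isBoundedDefault)
    apply Filter.Eventually.frequently
    filter_upwards [hev] with h hh
    obtain ⟨c, hc, hcle, -, -⟩ := hbasic h hh.1 hh.2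
    rw [EReal.coe_le_coe_iff]
    have hMc : |g' c (xm (t - h))| ≤ M := hM c ⟨by linarith [hc.1, hh.2], le_of_lt hc.2⟩ _
    linarith [neg_abs_le (g' c (xm (t - h)))]
  have hLne_top : diniUL φ t ≠ ⊤ := by
    have h1 := hub (xm t) (hφeq t ht).symm
    intro hcon
    rw [hcon] at h1
    exact (EReal.coe_ne_top _) (top_le_iff.mp h1)
  have hLne_bot : diniUL φ t ≠ ⊥ := by
    intro hcon
    rw [hcon] at hlb
    exact (EReal.coe_ne_bot _) (le_bot_iff.mp hlb)
  set Lr : ℝ := (diniUL φ t).toReal with hLrdef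
  have hLr : ((Lr : ℝ) : EReal) = diniUL φ t := EReal.coe_toReal hLne_top hLne_bot
  -- approximate argmin
  have heps : ∀ ε : ℝ, 0 < ε → ∃ x : C, g' t x ≤ Lr + ε ∧ φ t - ε ≤ g t x := by
    intro ε hε
    have hunif : UniformContinuousOn (fun p : ℝ × C => g' p.1 p.2) K :=
      hK.uniformContinuousOn_of_continuous (hg'cont.mono hKsub)
    obtain ⟨δ, hδ0, hδ⟩ := (Metric.uniformContinuousOn_iff).mp hunif (ε / 2) (by positivity)
    have hev2 : ∀ᶠ h in 𝓝[>] (0:ℝ), slp h < Lr + ε / 2 := by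
      have hlt : diniUL φ t < ((Lr + ε / 2 : ℝ) : EReal) := by
        rw [← hLr]
        exact_mod_cast (by linarith : Lr < Lr + ε / 2)
      have h2 := Filter.eventually_lt_of_limsup_lt hlt
      filter_upwards [h2] with h hh
      exact_mod_cast hh
    have hev3 : ∀ᶠ h in 𝓝[>] (0:ℝ), h < δ :=
      Filter.Eventually.filter_mono nhdsWithin_le_nhds (gt_mem_nhds hδ0)
    have hev4 : ∀ᶠ h in 𝓝[>] (0:ℝ), 2 * (h * M) < ε := by
      have htd : Tendsto (fun h : ℝ => 2 * (h * M)) (𝓝 (0:ℝ)) (𝓝 (0:ℝ)) := by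
        have h1 : Continuous (fun h : ℝ => 2 * (h * M)) := by continuity
        simpa using h1.tendsto 0
      exact Filter.Eventually.filter_mono nhdsWithin_le_nhds (htd.eventually (gt_mem_nhds hε))
    obtain ⟨h, ⟨hh0, hhts⟩, hh2, hh3, hh4⟩ := (hev.and (hev2.and (hev3.and hev4))).exists
    obtain ⟨c, hc, hcle, hgcl, -⟩ := hbasic h hh0 hhts
    refine ⟨xm (t - h), ?_, by linarith⟩
    have hcK : (c, xm (t - h)) ∈ K := ⟨⟨by linarith [hc.1], le_of_lt hc.2⟩, trivial⟩
    have htK : (t, xm (t - h)) ∈ K := ⟨⟨le_of_lt hs0t, le_refl t⟩, trivial⟩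
    have hdist : dist ((c, xm (t - h)) : ℝ × C) (t, xm (t - h)) < δ := by
      rw [Prod.dist_eq]
      have h1 : dist c t < δ := by
        rw [Real.dist_eq, abs_of_nonpos (by linarith [hc.2] : c - t ≤ 0)]
        linarith [hc.1]
      have h2 : dist (xm (t - h)) (xm (t - h)) < δ := by rw [dist_self]; exact hδ0
      exact max_lt h1 h2
    have hd2 := hδ (c, xm (t - h)) hcK (t, xm (t - h)) htK hdist
    rw [Real.dist_eq] at hd2
    have : g' t (xm (t - h)) - g' c (xm (t - h)) ≤ ε / 2 := by
      rw [abs_sub_comm] at hd2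
      linarith [le_abs_self (g' t (xm (t - h)) - g' c (xm (t - h)))]
    linarith
  -- nested closed sets
  set A : ℕ → Set C := fun n =>
    {x : C | g' t x ≤ Lr + 1 / (n + 1) ∧ φ t - 1 / (n + 1) ≤ g t x} with hAdef
  have hclosed : ∀ n, IsClosed (A n) := by
    intro n
    have h1 : IsClosed {x : C | g' t x ≤ Lr + 1 / (n + 1)} :=
      isClosed_le (slice_cont I g' hg'cont ht) continuous_const
    have h2 : IsClosed {x : C | φ t - 1 / (n + 1) ≤ g t x} :=
      isClosed_le continuous_const (slice_cont I g hgcont ht)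
    exact h1.inter h2
  have hanti : ∀ n, A (n + 1) ⊆ A n := by
    intro n x hx
    have hmono : (1 : ℝ) / (n + 1 + 1) ≤ 1 / (n + 1) := by
      apply one_div_le_one_div_of_le
      · positivity
      · linarith
    obtain ⟨h1, h2⟩ := hx
    push_cast at h1 h2 ⊢
    exact ⟨by linarith, by linarith⟩
  have hne : ∀ n, (A n).Nonempty := by
    intro n
    obtain ⟨x, h1, h2⟩ := heps (1 / (n + 1)) (by positivity)
    exact ⟨x, h1, h2⟩
  obtain ⟨xs, hxs⟩ := IsCompact.nonempty_iInter_of_sequence_nonempty_isCompact_isClosed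
    A hanti hne (hclosed 0).isCompact hclosed
  have hxsA : ∀ n : ℕ, xs ∈ A n := Set.mem_iInter.mp hxs
  have hx1 : g' t xs ≤ Lr := by
    by_contra hcon
    push_neg at hcon
    obtain ⟨n, hn⟩ := exists_nat_one_div_lt (show (0:ℝ) < g' t xs - Lr by linarith)
    have := (hxsA n).1
    push_cast at this hn
    linarith
  have hx2 : φ t ≤ g t xs := by
    by_contra hcon
    push_neg at hcon
    obtain ⟨n, hn⟩ := exists_nat_one_div_lt (show (0:ℝ) < φ t - g t xs by linarith)
    have := (hxsA n).2
    push_cast at this hn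
    linarith
  have hxsmem : g t xs = φ t := le_antisymm (hleφ t ht xs) hx2
  constructor
  · refine ⟨xs, hxsmem, ?_⟩
    show ((g' t xs : ℝ) : EReal) = diniUL φ t
    apply le_antisymm
    · rw [← hLr]
      exact_mod_cast hx1
    · exact hub xs hxsmem
  · rintro y ⟨x, hx, rfl⟩
    exact hub x hx

end auxS3

/-- for `g : I × C → ℝ` with `g` and `∂g/∂t` continuous and `C` compact,
`φ(t) = sup_{x ∈ C} g(t,x)` is continuous, and at every `t ∈ I` which is not the left
endpoint of `I` the upper left-hand Dini derivative of `φ` equals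
`min_{x ∈ C_t} (∂g/∂t)(t,x)`, where `C_t = {x ∈ C : g(t,x) = φ(t)}`. -/
theorem statement3
    {C : Type} [MetricSpace C] [CompactSpace C] [Nonempty C]
    (I : Set ℝ) (hI : I.OrdConnected)
    (g g' : ℝ → C → ℝ)
    (hderiv : ∀ x : C, ∀ t ∈ I, HasDerivWithinAt (fun s => g s x) (g' t x) I t)
    (hgcont : ContinuousOn (fun p : ℝ × C => g p.1 p.2) (I ×ˢ Set.univ))
    (hg'cont : ContinuousOn (fun p : ℝ × C => g' p.1 p.2) (I ×ˢ Set.univ)) :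
    ContinuousOn (fun t => ⨆ x : C, g t x) I ∧
    ∀ t ∈ I, (∃ s ∈ I, s < t) →
      IsLeast ((fun x : C => ((g' t x : ℝ) : EReal)) ''
          {x : C | g t x = ⨆ y : C, g t y})
        (diniUL (fun s => ⨆ x : C, g s x) t) := by
  refine ⟨auxCont I g hgcont, ?_⟩
  rintro t ht ⟨s0, hs0I, hs0t⟩
  exact auxDini I g hI g' hderiv hgcont hg'cont ht hs0I hs0t
end

section
/- Let C be a compact metric space, I an interval of ℝ, and g : I × C → ℝ a function such that g and its partial derivative ∂g/∂t (in the first variable) exist and are continuous on I × C. Define φ(t) := sup_{x ∈ C} g(t,x) and C_t := {x ∈ C : g(t,x) = φ(t)}. Then for every t ∈ I that is not the left endpoint of I, there exists x ∈ C_t such that the upper left-hand Dini derivative of φ at t satisfies d_L^+ φ(t) ≥ (∂g/∂t)(t,x); in particular d_L^+ φ(t) ≥ min_{x ∈ C_t} (∂g/∂t)(t,x). -/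
open Filter Topology

/-- for `g : I × C → ℝ` with `g` and `∂g/∂t` continuous and `C` compact,
at every `t ∈ I` which is not the left endpoint of `I` there is a maximizer `x ∈ C_t` of
`g(t,·)` with `d_L^+ φ(t) ≥ (∂g/∂t)(t,x)`, where `φ(t) = sup_{x ∈ C} g(t,x)`; in
particular `d_L^+ φ(t) ≥ min_{x ∈ C_t} (∂g/∂t)(t,x)`. -/
theorem statement5
    {C : Type} [MetricSpace C] [CompactSpace C] [Nonempty C]
    (I : Set ℝ) (hI : I.OrdConnected)
    (g g' : ℝ → C → ℝ)
    (hderiv : ∀ x : C, ∀ t ∈ I, HasDerivWithinAt (fun s => g s x) (g' t x) I t)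
    (hgcont : ContinuousOn (fun p : ℝ × C => g p.1 p.2) (I ×ˢ Set.univ))
    (hg'cont : ContinuousOn (fun p : ℝ × C => g' p.1 p.2) (I ×ˢ Set.univ)) :
    ∀ t ∈ I, (∃ s ∈ I, s < t) →
      ∃ x : C, g t x = (⨆ y : C, g t y) ∧
        ((g' t x : ℝ) : EReal) ≤ diniUL (fun s => ⨆ y : C, g s y) t := by
  rintro t ht ⟨s, hs, hst⟩
  set φ : ℝ → ℝ := fun u => ⨆ y : C, g u y with hφdef
  have hsub : Set.Icc s t ⊆ I := hI.out hs ht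
  -- slice continuity of g
  have gcont : ∀ u ∈ I, ContinuousOn (fun x : C => g u x) Set.univ := by
    intro u hu
    have hc : Continuous (fun x : C => ((u, x) : ℝ × C)) :=
      continuous_const.prodMk continuous_id
    exact hgcont.comp hc.continuousOn (fun x _ => Set.mk_mem_prod hu trivial)
  have hmax : ∀ u ∈ I, ∃ x : C, ∀ y : C, g u y ≤ g u x := by
    intro u hu
    obtain ⟨x, -, hx⟩ := isCompact_univ.exists_isMaxOn Set.univ_nonempty (gcont u hu)
    exact ⟨x, fun y => hx (Set.mem_univ y)⟩
  have hφ_eq : ∀ u, ∀ x : C, (∀ y, g u y ≤ g u x) → φ u = g u x := by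
    intro u x hx
    refine le_antisymm (ciSup_le hx) (le_ciSup ⟨g u x, ?_⟩ x)
    rintro _ ⟨y, rfl⟩; exact hx y
  -- the sequence of steps
  set d := t - s with hd
  have hd0 : 0 < d := sub_pos.mpr hst
  set hseq : ℕ → ℝ := fun n => d / (n + 1) with hhseq
  have hpos : ∀ n, 0 < hseq n := fun n => div_pos hd0 (by positivity)
  have hle : ∀ n, hseq n ≤ d := by
    intro n
    rw [hhseq]
    rw [div_le_iff₀ (by positivity)]
    nlinarith [hd0, (Nat.cast_nonneg n : (0:ℝ) ≤ n)]
  have hmem : ∀ n, t - hseq n ∈ I := fun n =>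
    hsub ⟨by linarith [hle n], by linarith [hpos n]⟩
  have htend0 : Tendsto hseq atTop (𝓝[>] (0:ℝ)) := by
    apply tendsto_nhdsWithin_of_tendsto_nhds_of_eventually_within
    · have h1 : Tendsto (fun n : ℕ => (1:ℝ) / (n + 1)) atTop (𝓝 0) :=
        tendsto_one_div_add_atTop_nhds_zero_nat
      have := h1.const_mul d
      simpa [hhseq, mul_one_div, div_eq_mul_inv] using this
    · exact Eventually.of_forall fun n => hpos n
  -- choose maximizers and MVT points
  have key : ∀ n : ℕ, ∃ x : C, (∀ y, g (t - hseq n) y ≤ g (t - hseq n) x) ∧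
      ∃ ξ ∈ Set.Ioo (t - hseq n) t,
        g' ξ x = (g t x - g (t - hseq n) x) / hseq n := by
    intro n
    obtain ⟨x, hx⟩ := hmax _ (hmem n)
    refine ⟨x, hx, ?_⟩
    have hab : t - hseq n < t := by linarith [hpos n]
    have hIcc : Set.Icc (t - hseq n) t ⊆ I := fun v hv =>
      hsub ⟨by linarith [hle n, hv.1], hv.2⟩
    have hIoo : Set.Ioo (t - hseq n) t ⊆ I := fun ξ hξ =>
      hIcc ⟨le_of_lt hξ.1, le_of_lt hξ.2⟩
    have hfc : ContinuousOn (fun u => g u x) (Set.Icc (t - hseq n) t) := fun u hu =>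
      ((hderiv x u (hIcc hu)).continuousWithinAt).mono hIcc
    have hff' : ∀ ξ ∈ Set.Ioo (t - hseq n) t,
        HasDerivAt (fun u => g u x) (g' ξ x) ξ := fun ξ hξ =>
      (hderiv x ξ (hIoo hξ)).hasDerivAt
        (mem_nhds_iff.mpr ⟨_, hIoo, isOpen_Ioo, hξ⟩)
    obtain ⟨ξ, hξ, heq⟩ := exists_hasDerivAt_eq_slope _ _ hab hfc hff'
    refine ⟨ξ, hξ, ?_⟩
    rw [heq, sub_sub_cancel]
  choose xn hxnmax ξn hξnmem hξneq using key
  -- extract convergent subsequence of maximizers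
  obtain ⟨x0, -, ψ, hψ, hxtend⟩ :=
    isCompact_univ.tendsto_subseq (fun n => (Set.mem_univ (xn n)))
  -- joint limits helper
  have hjoint : ∀ (G : ℝ → C → ℝ),
      ContinuousOn (fun p : ℝ × C => G p.1 p.2) (I ×ˢ Set.univ) →
      ∀ (a : ℕ → ℝ) (b : ℕ → C) (z : C), (∀ n, a n ∈ I) → Tendsto a atTop (𝓝 t) →
      Tendsto b atTop (𝓝 z) →
      Tendsto (fun n => G (a n) (b n)) atTop (𝓝 (G t z)) := by
    intro G hG a b z haI hat hbt
    have h1 : Tendsto (fun n => ((a n, b n) : ℝ × C)) atTop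
        (𝓝[I ×ˢ Set.univ] (t, z)) := by
      rw [tendsto_nhdsWithin_iff]
      exact ⟨hat.prodMk_nhds hbt, Eventually.of_forall fun n => ⟨haI n, trivial⟩⟩
    exact ((hG (t, z) ⟨ht, trivial⟩).tendsto).comp h1
  have hψtop : Tendsto ψ atTop atTop := hψ.tendsto_atTop
  have hhψ0 : Tendsto (fun n => hseq (ψ n)) atTop (𝓝 0) :=
    (tendsto_nhdsWithin_iff.mp (htend0.comp hψtop)).1
  have hatend : Tendsto (fun n => t - hseq (ψ n)) atTop (𝓝 t) := by
    simpa using (tendsto_const_nhds (x := t)).sub hhψ0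
  -- x0 is a maximizer at t
  have hx0max : ∀ y : C, g t y ≤ g t x0 := by
    intro y
    have hL : Tendsto (fun n => g (t - hseq (ψ n)) y) atTop (𝓝 (g t y)) :=
      hjoint g hgcont _ (fun _ => y) y (fun n => hmem (ψ n)) hatend tendsto_const_nhds
    have hR : Tendsto (fun n => g (t - hseq (ψ n)) (xn (ψ n))) atTop (𝓝 (g t x0)) :=
      hjoint g hgcont _ _ x0 (fun n => hmem (ψ n)) hatend hxtend
    exact le_of_tendsto_of_tendsto' hL hR (fun n => hxnmax (ψ n) y)
  have hφt : φ t = g t x0 := hφ_eq t x0 hx0max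
  refine ⟨x0, hφt.symm, ?_⟩
  -- ξ (ψ n) → t
  have hξtend : Tendsto (fun n => ξn (ψ n)) atTop (𝓝 t) := by
    apply tendsto_of_tendsto_of_tendsto_of_le_of_le hatend tendsto_const_nhds
    · exact fun n => le_of_lt (hξnmem (ψ n)).1
    · exact fun n => le_of_lt (hξnmem (ψ n)).2
  have hξI : ∀ n, ξn (ψ n) ∈ I := fun n =>
    hsub ⟨by linarith [hle (ψ n), (hξnmem (ψ n)).1], le_of_lt (hξnmem (ψ n)).2⟩
  -- lower bound sequence tends to g' t x0
  have hlow : Tendsto (fun n => g' (ξn (ψ n)) (xn (ψ n))) atTop (𝓝 (g' t x0)) :=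
    hjoint g' hg'cont _ _ x0 hξI hξtend hxtend
  -- each slope dominates the lower bound
  have hslope : ∀ n, g' (ξn (ψ n)) (xn (ψ n)) ≤
      (φ t - φ (t - hseq (ψ n))) / hseq (ψ n) := by
    intro n
    rw [hξneq (ψ n), hφ_eq _ _ (hxnmax (ψ n))]
    exact (div_le_div_iff_of_pos_right (hpos (ψ n))).mpr (by linarith [hφt ▸ hx0max (xn (ψ n))])
  -- conclude via limsup comparison
  set u : ℝ → EReal := fun h => (((φ t - φ (t - h)) / h : ℝ) : EReal) with hudef
  have hmaple : map (fun n => hseq (ψ n)) atTop ≤ 𝓝[>] (0:ℝ) := htend0.comp hψtop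
  have h1 : ((g' t x0 : ℝ) : EReal) =
      liminf (fun n => ((g' (ξn (ψ n)) (xn (ψ n)) : ℝ) : EReal)) atTop :=
    (Tendsto.liminf_eq (EReal.tendsto_coe.mpr hlow)).symm
  have h2 : liminf (fun n => ((g' (ξn (ψ n)) (xn (ψ n)) : ℝ) : EReal)) atTop ≤
      liminf (u ∘ fun n => hseq (ψ n)) atTop := by
    refine liminf_le_liminf (Eventually.of_forall fun n => ?_)
    exact EReal.coe_le_coe_iff.mpr (hslope n)
  have h3 : liminf (u ∘ fun n => hseq (ψ n)) atTop ≤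
      limsup (u ∘ fun n => hseq (ψ n)) atTop := liminf_le_limsup
  have h4 : limsup (u ∘ fun n => hseq (ψ n)) atTop = limsup u (map (fun n => hseq (ψ n)) atTop) :=
    limsup_comp u _ atTop
  have h5 : limsup u (map (fun n => hseq (ψ n)) atTop) ≤ limsup u (𝓝[>] (0:ℝ)) :=
    limsup_le_limsup_of_le hmaple
  have : ((g' t x0 : ℝ) : EReal) ≤ limsup u (𝓝[>] (0:ℝ)) :=
    h1.trans_le ((h2.trans h3).trans (h4.le.trans h5))
  simpa only [diniUL, hudef] using this
end

section
/- Let [a,b] be a closed interval of ℝ and f : [a,b] → ℝ a continuous function such that f(a) = 0 and the upper left-hand Dini derivative satisfies d_L^+ f(t) ≤ 0 for every t ∈ (a,b]. Then f(t) ≤ 0 for all t ∈ [a,b]. -/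
open Filter Topology

/-- if `f : [a,b] → ℝ` is continuous with `f(a) = 0` and upper left-hand
Dini derivative `≤ 0` on `(a,b]`, then `f ≤ 0` on `[a,b]`. -/
theorem statement8
    (a b : ℝ) (hab : a ≤ b) (f : ℝ → ℝ)
    (hf : ContinuousOn f (Set.Icc a b)) (hfa : f a = 0)
    (hdini : ∀ t ∈ Set.Ioc a b, diniUL f t ≤ (0 : EReal)) :
    ∀ t ∈ Set.Icc a b, f t ≤ 0 := by
  -- main claim
  have key : ∀ ε : ℝ, 0 < ε → ∀ t ∈ Set.Icc a b, f t - ε * (t - a) ≤ 0 := by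
    intro ε hε t₀ ht₀
    by_contra hpos
    push_neg at hpos
    set g : ℝ → ℝ := fun t => f t - ε * (t - a) with hg
    have hga : g a = 0 := by simp [hg, hfa]
    have hgc : ContinuousOn g (Set.Icc a b) := by
      apply hf.sub
      fun_prop
    have hsub : Set.Icc a t₀ ⊆ Set.Icc a b := Set.Icc_subset_Icc le_rfl ht₀.2
    set A : Set ℝ := {t ∈ Set.Icc a t₀ | g t₀ ≤ g t} with hA
    have hAne : A.Nonempty := ⟨t₀, ⟨⟨ht₀.1, le_rfl⟩, le_rfl⟩⟩
    have hAclosed : IsClosed A := by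
      have : A = Set.Icc a t₀ ∩ (Set.Icc a t₀ ∩ g ⁻¹' Set.Ici (g t₀)) := by
        ext x; simp only [hA, Set.mem_setOf_eq, Set.mem_inter_iff, Set.mem_preimage, Set.mem_Ici]; tauto
      rw [this]
      exact isClosed_Icc.inter ((hgc.mono hsub).preimage_isClosed_of_isClosed
        isClosed_Icc isClosed_Ici)
    have hAcpt : IsCompact A := (isCompact_Icc (a := a) (b := t₀)).of_isClosed_subset
      hAclosed (fun x hx => hx.1)
    obtain ⟨c, hcA, hcleast⟩ := hAcpt.exists_isLeast hAne
    have hgca : g t₀ ≤ g c := hcA.2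
    have hgt₀pos : 0 < g t₀ := hpos
    have hca : a < c := by
      rcases eq_or_lt_of_le hcA.1.1 with h | h
      · exfalso; rw [← h] at hgca; rw [hga] at hgca; linarith
      · exact h
    have hcIoc : c ∈ Set.Ioc a b := ⟨hca, le_trans hcA.1.2 ht₀.2⟩
    -- Dini condition at c
    have hd := hdini c hcIoc
    have hlt : diniUL f c < ((ε : ℝ) : EReal) := lt_of_le_of_lt hd (by exact_mod_cast hε)
    have hev : ∀ᶠ h in 𝓝[>] (0 : ℝ),
        (((f c - f (c - h)) / h : ℝ) : EReal) < ((ε : ℝ) : EReal) :=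
      Filter.eventually_lt_of_limsup_lt hlt
    have hev2 : ∀ᶠ h in 𝓝[>] (0 : ℝ), h < c - a := by
      have : Set.Iio (c - a) ∈ 𝓝 (0 : ℝ) := Iio_mem_nhds (by linarith)
      exact Filter.eventually_iff_exists_mem.mpr ⟨Set.Iio (c - a),
        nhdsWithin_le_nhds this, fun h hh => hh⟩
    obtain ⟨h, hh1, hh2, hhpos⟩ : ∃ h : ℝ,
        (((f c - f (c - h)) / h : ℝ) : EReal) < ((ε : ℝ) : EReal) ∧ h < c - a ∧ 0 < h := by
      have := (hev.and (hev2.and (eventually_mem_nhdsWithin (s := Set.Ioi (0:ℝ))))).exists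
      obtain ⟨h, h1, h2, h3⟩ := this
      exact ⟨h, h1, h2, h3⟩
    have hq : (f c - f (c - h)) / h < ε := by exact_mod_cast hh1
    have hflt : f c - f (c - h) < ε * h := by
      have := (div_lt_iff₀ hhpos).mp hq
      linarith [this]
    have hglt : g c < g (c - h) := by
      simp only [hg]
      ring_nf
      nlinarith
    have hmemA : c - h ∈ A := ⟨⟨by linarith, by linarith [hcA.1.2]⟩, le_trans hgca hglt.le⟩
    have := hcleast hmemA
    linarith
  -- conclude
  intro t ht
  by_contra hpos
  push_neg at hpos
  have hC : (0:ℝ) < b - a + 1 := by linarith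
  set ε := f t / (2 * (b - a + 1)) with hε
  have hεpos : 0 < ε := by positivity
  have := key ε hεpos t ht
  have hta : t - a ≤ b - a + 1 := by linarith [ht.2]
  have : f t ≤ ε * (b - a + 1) := by nlinarith [mul_le_mul_of_nonneg_left hta hεpos.le]
  rw [hε] at this
  have : f t ≤ f t / 2 := by
    calc f t ≤ f t / (2 * (b - a + 1)) * (b - a + 1) := this
    _ = f t / 2 := by field_simp
  linarith
end

section
/- Let 𝔤 be a finite-dimensional real Lie algebra, 𝔥 ⊆ 𝔤 a Lie subalgebra, and 𝔪 ⊆ 𝔤 a subspace with 𝔤 = 𝔥 ⊕ 𝔪 (direct sum of vector spaces) and [𝔥,𝔪] ⊆ 𝔪; for Y ∈ 𝔤, Y_𝔪 denotes the projection of Y onto 𝔪 along 𝔥. Let 𝔨 ⊆ 𝔤 be an ideal, ⟨·,·⟩ an inner product on 𝔤 such that ad Z is ⟨·,·⟩-skew-symmetric for every Z ∈ 𝔨, and let 𝔪_𝔨 ⊆ 𝔪 be a subspace with 𝔨 = (𝔨 ∩ 𝔥) ⊕ 𝔪_𝔨 and 𝔪_𝔨 ⟨·,·⟩-orthogonal to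 𝔨 ∩ 𝔥. Let g be the inner product on 𝔪 given by g(X,Y) = ⟨P X, Y⟩ for a ⟨·,·⟩-self-adjoint positive-definite P : 𝔪 → 𝔪, let P_{𝔪_𝔨} := Pr ∘ P ∘ Pr where Pr is the ⟨·,·⟩-orthogonal projection onto 𝔪_𝔨, let {Ū_i}_{i=1}^n be a ⟨·,·⟩-orthonormal basis of 𝔪_𝔨 consisting of eigenvectors of P_{𝔪_𝔨} with eigenvalues 0 < p_1 ≤ … ≤ p_n, set U_i := Ū_i/√(p_i) and X := Ū_n, and let {V_j}_{j=1}^m be vectors completing {U_i}_{i=1}^n to a g-orthonormal basis of 𝔪. Then Σ_{i,j} g([U_i,V_j]_𝔪, X)² − Σ_j ‖[X,V_j]_𝔪‖²_g = Σ_{i,j} ⟨[U_i,X], V_j⟩² (p_n² − p_i²) ≥ 0. -/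
open scoped BigOperators

/-- the key estimate in the proof of the algebraic Bochner result.
With `𝔤 = 𝔥 ⊕ 𝔪` reductive, `𝔨` an ideal with `ad 𝔨` skew-symmetric for a background
inner product `⟨·,·⟩ = ip`, `𝔪_𝔨` a complement of `𝔨 ∩ 𝔥` in `𝔨` orthogonal to it,
`g = ⟨P ·, ·⟩` an inner product on `𝔪`, `Ubar i` an `ip`-orthonormal eigenbasis of the
compression `P_{𝔪_𝔨} = Pr ∘ P ∘ Pr` with eigenvalues `0 < p 0 ≤ … ≤ p n`,
`U i = Ubar i / √(p i)`, `X = Ubar n`, and `V j` completing the `U i` to a `g`-orthonormal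
basis of `𝔪`, one has
`Σ_{i,j} g([U i, V j]_𝔪, X)² − Σ_j ‖[X, V j]_𝔪‖²_g
  = Σ_{i,j} ⟨[U i, X], V j⟩² (p n² − p i²) ≥ 0`. -/
theorem statement14
    (𝔤 : Type) [LieRing 𝔤] [LieAlgebra ℝ 𝔤] [FiniteDimensional ℝ 𝔤]
    (𝔥 : LieSubalgebra ℝ 𝔤) (𝔪 : Submodule ℝ 𝔤)
    (hcompl : IsCompl 𝔪 𝔥.toSubmodule)
    (hred : ∀ Z ∈ 𝔥, ∀ X ∈ 𝔪, ⁅Z, X⁆ ∈ 𝔪)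
    -- the projection of 𝔤 onto 𝔪 along 𝔥
    (proj : 𝔤 →ₗ[ℝ] ↥𝔪)
    (hproj : proj = Submodule.linearProjOfIsCompl 𝔪 𝔥.toSubmodule hcompl)
    -- 𝔨 is an ideal of 𝔤
    (𝔨 : LieIdeal ℝ 𝔤)
    -- an inner product on 𝔤 for which ad Z is skew-symmetric for every Z ∈ 𝔨
    (ip : 𝔤 →ₗ[ℝ] 𝔤 →ₗ[ℝ] ℝ)
    (hip_symm : ∀ x y : 𝔤, ip x y = ip y x)
    (hip_pos : ∀ x : 𝔤, x ≠ 0 → 0 < ip x x)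
    (hip_skew : ∀ Z ∈ 𝔨, ∀ x y : 𝔤, ip ⁅Z, x⁆ y = - ip x ⁅Z, y⁆)
    -- 𝔪_𝔨 ⊆ 𝔪 with 𝔨 = (𝔨 ∩ 𝔥) ⊕ 𝔪_𝔨, the sum being ip-orthogonal
    (𝔪𝔨 : Submodule ℝ ↥𝔪)
    (hsum : (𝔨.toSubmodule ⊓ 𝔥.toSubmodule) ⊔ 𝔪𝔨.map 𝔪.subtype = 𝔨.toSubmodule)
    (hdisj : Disjoint (𝔨.toSubmodule ⊓ 𝔥.toSubmodule) (𝔪𝔨.map 𝔪.subtype))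
    (horth : ∀ x ∈ 𝔪𝔨.map 𝔪.subtype, ∀ y ∈ 𝔨.toSubmodule ⊓ 𝔥.toSubmodule, ip x y = 0)
    -- g(X,Y) = ⟨P X, Y⟩ with P ip-self-adjoint and positive definite
    (P : ↥𝔪 →ₗ[ℝ] ↥𝔪)
    (hP_sa : ∀ X Y : ↥𝔪, ip (P X : 𝔤) (Y : 𝔤) = ip (X : 𝔤) (P Y : 𝔤))
    (hP_pos : ∀ X : ↥𝔪, X ≠ 0 → 0 < ip (P X : 𝔤) (X : 𝔤))
    (g : ↥𝔪 →ₗ[ℝ] ↥𝔪 →ₗ[ℝ] ℝ)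
    (hg : ∀ X Y : ↥𝔪, g X Y = ip (P X : 𝔤) (Y : 𝔤))
    -- Pr is the ip-orthogonal projection of 𝔪 onto 𝔪_𝔨
    (Pr : ↥𝔪 →ₗ[ℝ] ↥𝔪)
    (hPr_mem : ∀ x : ↥𝔪, Pr x ∈ 𝔪𝔨)
    (hPr_id : ∀ x ∈ 𝔪𝔨, Pr x = x)
    (hPr_orth : ∀ x : ↥𝔪, ∀ y ∈ 𝔪𝔨, ip ((x : 𝔤) - (Pr x : 𝔤)) (y : 𝔤) = 0)
    -- Ubar is an ip-orthonormal basis of 𝔪_𝔨 of eigenvectors of Pr ∘ P ∘ Pr with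
    -- eigenvalues 0 < p 0 ≤ … ≤ p n
    (n : ℕ) (Ubar : Fin (n + 1) → ↥𝔪) (hUbar_mem : ∀ i, Ubar i ∈ 𝔪𝔨)
    (hUbar_on : ∀ i j, ip (Ubar i : 𝔤) (Ubar j : 𝔤) = if i = j then 1 else 0)
    (hUbar_span : Submodule.span ℝ (Set.range Ubar) = 𝔪𝔨)
    (p : Fin (n + 1) → ℝ) (hp_pos : ∀ i, 0 < p i) (hp_mono : Monotone p)
    (heig : ∀ i, Pr (P (Ubar i)) = p i • Ubar i)
    -- U i = Ubar i / √(p i), X = Ubar n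
    (U : Fin (n + 1) → ↥𝔪) (hU : ∀ i, U i = (Real.sqrt (p i))⁻¹ • Ubar i)
    (X : ↥𝔪) (hX : X = Ubar (Fin.last n))
    -- V completes U to a g-orthonormal basis of 𝔪
    (m : ℕ) (V : Fin m → ↥𝔪)
    (hUV_on : ∀ a b : Fin (n + 1) ⊕ Fin m,
      g (Sum.elim U V a) (Sum.elim U V b) = if a = b then 1 else 0)
    (hUV_span : Submodule.span ℝ (Set.range (Sum.elim U V)) = ⊤) :
    (∑ i, ∑ j, (g (proj ⁅(U i : 𝔤), (V j : 𝔤)⁆) X) ^ 2)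
        - (∑ j, g (proj ⁅(X : 𝔤), (V j : 𝔤)⁆) (proj ⁅(X : 𝔤), (V j : 𝔤)⁆))
      = ∑ i, ∑ j, (ip ⁅(U i : 𝔤), (X : 𝔤)⁆ (V j : 𝔤)) ^ 2
          * ((p (Fin.last n)) ^ 2 - (p i) ^ 2) ∧
    0 ≤ ∑ i, ∑ j, (ip ⁅(U i : 𝔤), (X : 𝔤)⁆ (V j : 𝔤)) ^ 2
          * ((p (Fin.last n)) ^ 2 - (p i) ^ 2) := by

  classical
  -- abbreviation for the bracket coefficients
  set c : Fin (n + 1) → Fin m → ℝ :=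
    fun i j => ip ⁅(U i : 𝔤), (X : 𝔤)⁆ (V j : 𝔤) with hc
  -- 𝔪𝔨 maps into 𝔨
  have hk_sub : 𝔪𝔨.map 𝔪.subtype ≤ 𝔨.toSubmodule := hsum ▸ le_sup_right
  have hmem𝔨 : ∀ y : ↥𝔪, y ∈ 𝔪𝔨 → (y : 𝔤) ∈ 𝔨 := fun y hy =>
    hk_sub ⟨y, hy, rfl⟩
  have hU_mem : ∀ i, U i ∈ 𝔪𝔨 := fun i => (hU i) ▸ 𝔪𝔨.smul_mem _ (hUbar_mem i)
  have hX_mem : X ∈ 𝔪𝔨 := hX ▸ hUbar_mem _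
  have hsqrt_pos : ∀ i, 0 < Real.sqrt (p i) := fun i => Real.sqrt_pos.mpr (hp_pos i)
  -- decomposition of elements of 𝔨
  have hdec : ∀ W : 𝔤, W ∈ 𝔨 →
      proj W ∈ 𝔪𝔨 ∧ W - (proj W : 𝔤) ∈ 𝔨.toSubmodule ⊓ 𝔥.toSubmodule := by
    intro W hW
    have hW' : W ∈ (𝔨.toSubmodule ⊓ 𝔥.toSubmodule) ⊔ 𝔪𝔨.map 𝔪.subtype := by
      rw [hsum]; exact hW
    obtain ⟨h', hh', m', hm', rfl⟩ := Submodule.mem_sup.mp hW'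
    obtain ⟨mm, hmm, hmmeq⟩ := hm'
    have hcoe : (mm : 𝔤) = m' := hmmeq
    have hproj_eq : proj (h' + m') = mm := by
      rw [hproj]
      change (Submodule.projectionOnto 𝔪 𝔥.toSubmodule hcompl) (h' + m') = mm
      rw [map_add,
        Submodule.projectionOnto_apply_of_mem_right hcompl hh'.2, zero_add, ← hcoe]
      exact Submodule.projectionOnto_apply_left hcompl mm
    rw [hproj_eq]
    refine ⟨hmm, ?_⟩
    rw [hcoe, add_sub_cancel_right]
    exact hh' 
  -- symmetry and positivity of g
  have gsymm : ∀ x y : ↥𝔪, g x y = g y x := fun x y => by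
    rw [hg, hg, hP_sa, hip_symm]
  have gpos : ∀ x : ↥𝔪, x ≠ 0 → 0 < g x x := fun x hx => by
    rw [hg]; exact hP_pos x hx
  -- g of anything in 𝔪𝔨 against V k vanishes
  have gV0 : ∀ (k : Fin m) (y : ↥𝔪), y ∈ 𝔪𝔨 → g y (V k) = 0 := by
    intro k
    have hUbar0 : ∀ i, ip (Ubar i : 𝔤) (P (V k) : 𝔤) = 0 := by
      intro i
      have h1 := hUV_on (Sum.inl i) (Sum.inr k)
      simp only [Sum.elim_inl, Sum.elim_inr, reduceCtorEq, if_false] at h1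
      rw [hg, hP_sa, hU i] at h1
      have h2 : ((((Real.sqrt (p i))⁻¹ • Ubar i : ↥𝔪) : 𝔤)) =
          (Real.sqrt (p i))⁻¹ • (Ubar i : 𝔤) := rfl
      rw [h2, map_smul, LinearMap.smul_apply, smul_eq_mul] at h1
      rcases mul_eq_zero.mp h1 with h | h
      · exact absurd h (inv_ne_zero (ne_of_gt (hsqrt_pos i)))
      · exact h
    have key : ∀ y : ↥𝔪, y ∈ Submodule.span ℝ (Set.range Ubar) →
        ip (y : 𝔤) (P (V k) : 𝔤) = 0 := by
      intro y hy'
      induction hy' using Submodule.span_induction with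
      | mem z hz => obtain ⟨i, rfl⟩ := hz; exact hUbar0 i
      | zero => simp
      | add a b _ _ ha hb =>
        have : (((a + b : ↥𝔪)) : 𝔤) = (a : 𝔤) + (b : 𝔤) := rfl
        rw [this, map_add, LinearMap.add_apply, ha, hb, add_zero]
      | smul t a _ ha =>
        have : (((t • a : ↥𝔪)) : 𝔤) = t • (a : 𝔤) := rfl
        rw [this, map_smul, LinearMap.smul_apply, smul_eq_mul, ha, mul_zero]
    intro y hy
    rw [hg, hP_sa]; exact key y (hUbar_span ▸ hy)
  -- key formula: g (proj W) (Ubar i) = p i * ip W (Ubar i) for W ∈ 𝔨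
  have gUbar : ∀ W : 𝔤, W ∈ 𝔨 → ∀ i,
      g (proj W) (Ubar i) = p i * ip W (Ubar i : 𝔤) := by
    intro W hW i
    obtain ⟨hm, hh⟩ := hdec W hW
    have e1 : g (proj W) (Ubar i) = ip ((proj W : 𝔤)) (P (Ubar i) : 𝔤) := by
      rw [hg]; exact hP_sa _ _
    have e2 := hPr_orth (P (Ubar i)) (proj W) hm
    rw [map_sub, LinearMap.sub_apply, sub_eq_zero] at e2
    have e3 : ip ((proj W : 𝔤)) (P (Ubar i) : 𝔤)
        = ip ((proj W : 𝔤)) ((Pr (P (Ubar i)) : 𝔤)) := by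
      rw [hip_symm, e2, hip_symm]
    have e4 : ((Pr (P (Ubar i)) : 𝔤)) = p i • (Ubar i : 𝔤) := by
      rw [heig i]; rfl
    have e5 : ip (W - (proj W : 𝔤)) (Ubar i : 𝔤) = 0 := by
      rw [hip_symm]
      exact horth (Ubar i : 𝔤) ⟨Ubar i, hUbar_mem i, rfl⟩ _ hh
    rw [map_sub, LinearMap.sub_apply, sub_eq_zero] at e5
    rw [e1, e3, e4, map_smul, smul_eq_mul, ← e5]
  -- Parseval for the g-orthonormal basis
  set e : Fin (n + 1) ⊕ Fin m → ↥𝔪 := Sum.elim U V with he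
  have parseval : ∀ w : ↥𝔪, g w w = ∑ a, (g w (e a)) ^ 2 := by
    intro w
    set r : ↥𝔪 := w - ∑ a, g w (e a) • e a with hr
    have hrb : ∀ b, g r (e b) = 0 := by
      intro b
      rw [hr]
      simp only [map_sub, map_sum, map_smul, LinearMap.sub_apply, LinearMap.sum_apply,
        LinearMap.smul_apply, smul_eq_mul]
      rw [Finset.sum_congr rfl (fun a _ => by rw [hUV_on a b])]
      simp [mul_ite, Finset.sum_ite_eq']
    have hrx : ∀ x : ↥𝔪, g r x = 0 := by
      intro x
      have hx : x ∈ Submodule.span ℝ (Set.range e) := by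
        rw [hUV_span]; exact Submodule.mem_top
      induction hx using Submodule.span_induction with
      | mem z hz => obtain ⟨b, rfl⟩ := hz; exact hrb b
      | zero => simp
      | add a b _ _ ha hb => rw [map_add, ha, hb, add_zero]
      | smul t a _ ha => rw [map_smul, smul_eq_mul, ha, mul_zero]
    have hr0 : r = 0 := by
      by_contra h
      exact absurd (hrx r) (ne_of_gt (gpos r h))
    have hw : w = ∑ a, g w (e a) • e a := by
      have := sub_eq_zero.mp hr0
      exact this
    calc g w w = g w (∑ a, g w (e a) • e a) := by rw [← hw]
      _ = ∑ a, (g w (e a)) ^ 2 := by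
          rw [map_sum]
          exact Finset.sum_congr rfl fun a _ => by rw [map_smul, smul_eq_mul, sq]
  -- first key computation
  have key1 : ∀ i j, g (proj ⁅(U i : 𝔤), (V j : 𝔤)⁆) X
      = - (p (Fin.last n) * c i j) := by
    intro i j
    have hW : ⁅(U i : 𝔤), (V j : 𝔤)⁆ ∈ 𝔨 := lie_mem_left ℝ 𝔤 𝔨 _ _ (hmem𝔨 _ (hU_mem i))
    rw [hX, gUbar _ hW (Fin.last n)]
    have hskew := hip_skew _ (hmem𝔨 _ (hU_mem i)) (V j : 𝔤) (Ubar (Fin.last n) : 𝔤)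
    rw [hskew, hc]
    simp only [hX]
    rw [hip_symm]
    ring
  -- second key computation
  have key2 : ∀ i j, g (proj ⁅(X : 𝔤), (V j : 𝔤)⁆) (U i) = p i * c i j := by
    intro i j
    have hW : ⁅(X : 𝔤), (V j : 𝔤)⁆ ∈ 𝔨 := lie_mem_left ℝ 𝔤 𝔨 _ _ (hmem𝔨 _ hX_mem)
    have hUi : (Ubar i : ↥𝔪) = Real.sqrt (p i) • U i := by
      rw [hU i, smul_smul, mul_inv_cancel₀ (ne_of_gt (hsqrt_pos i)), one_smul]
    have hUcoe : ((U i : ↥𝔪) : 𝔤) = (Real.sqrt (p i))⁻¹ • ((Ubar i : ↥𝔪) : 𝔤) := by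
      rw [hU i]; rfl
    have h1 : g (proj ⁅(X : 𝔤), (V j : 𝔤)⁆) (U i)
        = (Real.sqrt (p i))⁻¹ * (p i * ip ⁅(X : 𝔤), (V j : 𝔤)⁆ (Ubar i : 𝔤)) := by
      rw [hU i, map_smul, smul_eq_mul, gUbar _ hW i]
    have hskew := hip_skew _ (hmem𝔨 _ hX_mem) (V j : 𝔤) (Ubar i : 𝔤)
    have h2 : ip ⁅(X : 𝔤), (V j : 𝔤)⁆ (Ubar i : 𝔤) = Real.sqrt (p i) * c i j := by
      rw [hskew]
      have h3 : (⁅(X : 𝔤), (Ubar i : 𝔤)⁆ : 𝔤) = - (Real.sqrt (p i) • ⁅(U i : 𝔤), (X : 𝔤)⁆) := by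
        rw [← lie_skew]
        congr 1
        have : ((Ubar i : ↥𝔪) : 𝔤) = Real.sqrt (p i) • ((U i : ↥𝔪) : 𝔤) := by
          rw [hUi]; rfl
        rw [this, smul_lie]
      rw [h3, map_neg, map_smul, smul_eq_mul, hc]
      simp only [neg_neg]
      rw [hip_symm]
    rw [h1, h2]
    have hs := ne_of_gt (hsqrt_pos i)
    have hps : Real.sqrt (p i) * Real.sqrt (p i) = p i :=
      Real.mul_self_sqrt (le_of_lt (hp_pos i))
    field_simp
  -- norm of the projected bracket
  have key3 : ∀ j, g (proj ⁅(X : 𝔤), (V j : 𝔤)⁆) (proj ⁅(X : 𝔤), (V j : 𝔤)⁆)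
      = ∑ i, (p i * c i j) ^ 2 := by
    intro j
    have hW : ⁅(X : 𝔤), (V j : 𝔤)⁆ ∈ 𝔨 := lie_mem_left ℝ 𝔤 𝔨 _ _ (hmem𝔨 _ hX_mem)
    have hm := (hdec _ hW).1
    rw [parseval]
    rw [Fintype.sum_sum_type]
    have hV : ∀ k : Fin m, (g (proj ⁅(X : 𝔤), (V j : 𝔤)⁆) (e (Sum.inr k))) ^ 2 = 0 := by
      intro k
      have : e (Sum.inr k) = V k := rfl
      rw [this, gV0 k _ hm]
      norm_num
    rw [Finset.sum_congr rfl (fun k _ => hV k), Finset.sum_const, smul_zero, add_zero]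
    exact Finset.sum_congr rfl fun i _ => by
      have : e (Sum.inl i) = U i := rfl
      rw [this, key2 i j]
  constructor
  · have lhs1 : (∑ i, ∑ j, (g (proj ⁅(U i : 𝔤), (V j : 𝔤)⁆) X) ^ 2)
        = ∑ i, ∑ j, (p (Fin.last n)) ^ 2 * (c i j) ^ 2 := by
      refine Finset.sum_congr rfl fun i _ => Finset.sum_congr rfl fun j _ => ?_
      rw [key1 i j]; ring
    have lhs2 : (∑ j, g (proj ⁅(X : 𝔤), (V j : 𝔤)⁆) (proj ⁅(X : 𝔤), (V j : 𝔤)⁆))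
        = ∑ i, ∑ j, (p i) ^ 2 * (c i j) ^ 2 := by
      rw [Finset.sum_congr rfl (fun j _ => key3 j), Finset.sum_comm]
      refine Finset.sum_congr rfl fun i _ => Finset.sum_congr rfl fun j _ => ?_
      ring
    rw [lhs1, lhs2, ← Finset.sum_sub_distrib]
    refine Finset.sum_congr rfl fun i _ => ?_
    rw [← Finset.sum_sub_distrib]
    refine Finset.sum_congr rfl fun j _ => ?_
    ring
  · refine Finset.sum_nonneg fun i _ => Finset.sum_nonneg fun j _ => ?_
    have h1 : p i ≤ p (Fin.last n) := hp_mono (Fin.le_last i)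
    have h2 : (p i) ^ 2 ≤ (p (Fin.last n)) ^ 2 :=
      pow_le_pow_left₀ (le_of_lt (hp_pos i)) h1 2
    exact mul_nonneg (sq_nonneg _) (sub_nonneg.mpr h2)
end
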